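/- Let n ≥ 4 and k an integer. There exists an n×2 integer matrix P with Pᵀ P = k·I₂ if and only if k ≥ 0. Equivalently, there exist two orthogonal integer vectors in ℤⁿ each of squared length k if and only if k is nonnegative. (This is the algebraic content of: there is a degree k map f: (ℂP²)^{♯n} → ℂP²♯ℂP², n ≥ 4, if and only if k is a nonnegative integer.) -/
import Mathlib


open Matrix

/-- Auxiliary: the entries of the `n × 2` matrix built from a four-squares
representation. -/
def qmat (a b c d : ℤ) (m : ℕ) (j : Fin 2) : ℤ :=
  if m = 0 then (if j = 0 then a else -b)
  else if m = 1 then (if j = 0 then b else a)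
  else if m = 2 then (if j = 0 then c else -d)
  else if m = 3 then (if j = 0 then d else c)
  else 0

theorem degree_cp2_n_to_two {n : ℕ} (hn : 4 ≤ n) (k : ℤ) :
    (∃ P : Matrix (Fin n) (Fin 2) ℤ, Pᵀ * P = k • (1 : Matrix (Fin 2) (Fin 2) ℤ)) ↔
      0 ≤ k := by
  constructor
  · rintro ⟨P, hP⟩
    have h00 := congrFun (congrFun hP 0) 0
    simp [Matrix.mul_apply, Matrix.smul_apply, Matrix.one_apply] at h00
    rw [← h00]
    exact Finset.sum_nonneg fun i _ => mul_self_nonneg _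
  · intro hk
    obtain ⟨a, b, c, d, habcd⟩ := Nat.sum_four_squares k.toNat
    have hk' : (a:ℤ)^2 + (b:ℤ)^2 + (c:ℤ)^2 + (d:ℤ)^2 = k := by
      have := congrArg (Nat.cast : ℕ → ℤ) habcd
      push_cast at this
      rw [this, Int.toNat_of_nonneg hk]
    refine ⟨Matrix.of fun i j => qmat a b c d i.val j, ?_⟩
    ext j j'
    rw [Matrix.mul_apply]
    simp only [Matrix.transpose_apply, Matrix.of_apply]
    rw [Fin.sum_univ_eq_sum_range (fun m => qmat a b c d m j * qmat a b c d m j')]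
    rw [← Finset.sum_subset (Finset.range_subset_range.2 hn)
      (fun m _ hm => by
        have h4 : 4 ≤ m := by simpa using hm
        simp [qmat, show m ≠ 0 by omega, show m ≠ 1 by omega,
          show m ≠ 2 by omega, show m ≠ 3 by omega])]
    fin_cases j <;> fin_cases j' <;>
      simp [qmat, Finset.sum_range_succ, Matrix.smul_apply, Matrix.one_apply] <;>
      linarith [hk']
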